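/- The collection {P(n)} of flow graphs with n linearly ordered edges, together with the substitution operation that replaces the j-th edge of G ∈ P(n) by the flow graph G_j ∈ P(k_j) (identifying the entry edge of G_j with the replaced edge's source side and exit edge with its target side) and the unit e (the flow graph consisting of a single edge), forms a symmetric operad in Set: substitution is associative, e is a two-sided unit, and substitution is equivariant with respect to permutations of the ordered edges. -/

import Mathlib

/-- A digraph with designated source `s` and target `t` and a linearly ordered list of
edges `es` (the carrier of a flow graph with ordered edges). -/
structure OFG where
  V : Type
  s : V
  t : V
  es : List (V × V)

/-- `G` is a flow graph: `s` has no incoming edges, `t` no outgoing edges, there is a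
unique entry edge out of `s` and a unique exit edge into `t`, and every edge lies on a
source-to-target path. -/
def IsFlowO (G : OFG) : Prop :=
  (∀ e ∈ G.es, e.2 ≠ G.s) ∧ (∀ e ∈ G.es, e.1 ≠ G.t) ∧
  (∃! i : Fin G.es.length, (G.es.get i).1 = G.s) ∧
  (∃! i : Fin G.es.length, (G.es.get i).2 = G.t) ∧
  (∀ e ∈ G.es, ∃ p : List G.V, p.head? = some G.s ∧ p.getLast? = some G.t ∧
    p.Chain' (fun a b => (a, b) ∈ G.es) ∧ e ∈ p.zip p.tail)

/-- The gluing relation for substitution: the source/target of the `j`-th flow graph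
`Gs j` is identified with the source/target of the `j`-th edge of `G`. -/
def oGlueRel (G : OFG) (Gs : ℕ → OFG) :
    (G.V ⊕ Σ j : Fin G.es.length, (Gs (j : ℕ)).V) →
    (G.V ⊕ Σ j : Fin G.es.length, (Gs (j : ℕ)).V) → Prop :=
  fun x y => ∃ j : Fin G.es.length,
    (x = Sum.inl (G.es.get j).1 ∧ y = Sum.inr ⟨j, (Gs (j : ℕ)).s⟩) ∨
    (x = Sum.inl (G.es.get j).2 ∧ y = Sum.inr ⟨j, (Gs (j : ℕ)).t⟩)

/-- Vertices of the substitution `G ∘ (Gs)`. -/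
def compV (G : OFG) (Gs : ℕ → OFG) : Type := Quot (oGlueRel G Gs)

/-- The canonical embedding of the vertices of `Gs j` into the substitution. -/
def compEmb (G : OFG) (Gs : ℕ → OFG) (j : Fin G.es.length) :
    (Gs (j : ℕ)).V → compV G Gs :=
  fun v => Quot.mk (oGlueRel G Gs) (Sum.inr ⟨j, v⟩)

/-- The block of edges of the substitution coming from `Gs j`, in their given order. -/
def compBlock (G : OFG) (Gs : ℕ → OFG) (j : Fin G.es.length) :
    List (compV G Gs × compV G Gs) :=
  (Gs (j : ℕ)).es.map (fun e => (compEmb G Gs j e.1, compEmb G Gs j e.2))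

/-- Operadic substitution: replace the `j`-th edge of `G` by the flow graph `Gs j`,
with edge ordering inherited blockwise. -/
def compO (G : OFG) (Gs : ℕ → OFG) : OFG where
  V := compV G Gs
  s := Quot.mk (oGlueRel G Gs) (Sum.inl G.s)
  t := Quot.mk (oGlueRel G Gs) (Sum.inl G.t)
  es := (List.finRange G.es.length).flatMap (compBlock G Gs)

/-- The unit: the flow graph with a single edge. -/
def unitO : OFG := ⟨Bool, false, true, [(false, true)]⟩

/-- Isomorphism of flow graphs with ordered edges: a vertex bijection preserving source,
target, and the ordered edge list. -/
def OIso (G G' : OFG) : Prop :=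
  ∃ φ : G.V ≃ G'.V, φ G.s = G'.s ∧ φ G.t = G'.t ∧
    G'.es = G.es.map (Prod.map φ φ)

/-- The position at which the block of `Gs j` starts in the substituted edge list. -/
def offsetO (Gs : ℕ → OFG) (j : ℕ) : ℕ :=
  ((List.range j).map (fun a => (Gs a).es.length)).sum

/-- Reordering the edges of `G` by a permutation `σ`. -/
def permO (G : OFG) (σ : Equiv.Perm (Fin G.es.length)) : OFG :=
  ⟨G.V, G.s, G.t, List.ofFn (fun i => G.es.get (σ i))⟩

namespace OperadDev


lemma flatMap_single {α β : Type*} (l : List α) (f : α → β) :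
    (l.flatMap fun x => [f x]) = l.map f := by
  induction l with
  | nil => rfl
  | cons a l ih => simp [ih]

lemma map_self {α : Type*} (l : List α) (f : α → α) (h : ∀ x, f x = x) : l.map f = l := by
  rw [show f = id from funext h, List.map_id]



lemma cast_s {H H' : OFG} (hH : H = H') : cast (congrArg OFG.V hH) H.s = H'.s := by
  subst hH; rfl

lemma cast_t {H H' : OFG} (hH : H = H') : cast (congrArg OFG.V hH) H.t = H'.t := by
  subst hH; rfl

lemma mk_sigma_eq {n : ℕ} {Ks : ℕ → OFG} {T : Sort*} (f : (Σ j : Fin n, (Ks (j : ℕ)).V) → T)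
    {j j' : Fin n} (hjj : j = j') {v : (Ks (j : ℕ)).V} {v' : (Ks (j' : ℕ)).V}
    (hv : HEq v v') : f ⟨j, v⟩ = f ⟨j', v'⟩ := by
  subst hjj; rw [eq_of_heq hv]

lemma block_cast (G : OFG) (Gs : ℕ → OFG) (k : Fin G.es.length) (H : OFG)
    (hH : H = Gs (k : ℕ)) :
    H.es.map (fun e => (compEmb G Gs k (cast (congrArg OFG.V hH) e.1),
      compEmb G Gs k (cast (congrArg OFG.V hH) e.2))) = compBlock G Gs k := by
  subst hH; rfl

lemma flatMap_finRange_cast {γ : Type*} {a b : ℕ} (h : a = b) (F : Fin a → List γ) :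
    (List.finRange a).flatMap F
      = (List.finRange b).flatMap (fun j => F (Fin.cast h.symm j)) := by
  subst h; rfl

lemma flatMap_range_eq_finRange {γ : Type*} (n : ℕ) (F : Fin n → List γ) (g : ℕ → List γ)
    (hg : ∀ j : Fin n, g (j : ℕ) = F j) :
    (List.range n).flatMap g = (List.finRange n).flatMap F := by
  rw [← List.map_coe_finRange_eq_range, List.flatMap_map]
  exact congrArg (fun f => List.flatMap f _) (funext hg)



lemma off_succ (m : ℕ → ℕ) (j : ℕ) :
    ((List.range (j+1)).map m).sum = ((List.range j).map m).sum + m j := by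
  rw [List.range_succ, List.map_append, List.sum_append]; simp

lemma off_mono (m : ℕ → ℕ) {j j' : ℕ} (h : j ≤ j') :
    ((List.range j).map m).sum ≤ ((List.range j').map m).sum := by
  induction j', h using Nat.le_induction with
  | base => exact le_rfl
  | succ j' hj ih => rw [off_succ]; exact le_trans ih (Nat.le_add_right _ _)

lemma off_idx_lt (m : ℕ → ℕ) {j n i : ℕ} (hj : j < n) (hi : i < m j) :
    ((List.range j).map m).sum + i < ((List.range n).map m).sum :=
  calc ((List.range j).map m).sum + i < ((List.range j).map m).sum + m j :=
        Nat.add_lt_add_left hi _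
    _ = ((List.range (j+1)).map m).sum := (off_succ m j).symm
    _ ≤ ((List.range n).map m).sum := off_mono m hj

lemma off_inj (m : ℕ → ℕ) {j j' i i' : ℕ} (hi : i < m j) (hi' : i' < m j')
    (h : ((List.range j).map m).sum + i = ((List.range j').map m).sum + i') :
    j = j' ∧ i = i' := by
  rcases lt_trichotomy j j' with hlt | heq | hgt
  · exfalso
    have h1 : ((List.range j).map m).sum + i < ((List.range j').map m).sum :=
      lt_of_lt_of_le (by calc ((List.range j).map m).sum + i
            < ((List.range j).map m).sum + m j := Nat.add_lt_add_left hi _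
          _ = ((List.range (j+1)).map m).sum := (off_succ m j).symm) (off_mono m hlt)
    omega
  · subst heq
    exact ⟨rfl, by omega⟩
  · exfalso
    have h1 : ((List.range j').map m).sum + i' < ((List.range j).map m).sum :=
      lt_of_lt_of_le (by calc ((List.range j').map m).sum + i'
            < ((List.range j').map m).sum + m j' := Nat.add_lt_add_left hi' _
          _ = ((List.range (j'+1)).map m).sum := (off_succ m j').symm) (off_mono m hgt)
    omega

lemma off_decomp (m : ℕ → ℕ) : ∀ (n e : ℕ), e < ((List.range n).map m).sum →
    ∃ j, j < n ∧ ∃ i, i < m j ∧ ((List.range j).map m).sum + i = e := by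
  intro n
  induction n with
  | zero => intro e he; simp at he
  | succ n ih =>
    intro e he
    by_cases hc : e < ((List.range n).map m).sum
    · obtain ⟨j, hj, hrest⟩ := ih e hc
      exact ⟨j, Nat.lt_succ_of_lt hj, hrest⟩
    · push_neg at hc
      rw [off_succ] at he
      exact ⟨n, Nat.lt_succ_self n, e - ((List.range n).map m).sum, by omega, by omega⟩

lemma flatMap_decomp {γ : Type*} (A : ℕ → List γ) (m : ℕ → ℕ) :
    ∀ (n k : ℕ), (List.range' k (((List.range n).map m).sum)).flatMap A
      = (List.range n).flatMap
          (fun j => (List.range' (k + ((List.range j).map m).sum) (m j)).flatMap A) := by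
  intro n
  induction n with
  | zero => intro k; simp
  | succ n ih =>
    intro k
    have hr : List.range' k (((List.range n).map m).sum + m n)
        = List.range' k (((List.range n).map m).sum)
          ++ List.range' (k + ((List.range n).map m).sum) (m n) := by
      rw [Nat.add_comm]
      simpa [Nat.add_comm] using (List.range'_append (s := k) (m := ((List.range n).map m).sum) (n := m n) (step := 1)).symm
    rw [off_succ, hr, List.flatMap_append, ih k, List.range_succ, List.flatMap_append]
    simp

lemma take_flatMap_length {γ : Type*} (n j : ℕ) (hj : j ≤ n) (F : Fin n → List γ)
    (m : ℕ → ℕ) (hm : ∀ a : Fin n, (F a).length = m (a : ℕ)) :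
    (((List.finRange n).take j).flatMap F).length = ((List.range j).map m).sum := by
  rw [List.length_flatMap]
  have h1 : List.map (fun a => (F a).length) ((List.finRange n).take j)
      = List.map m (List.map Fin.val ((List.finRange n).take j)) := by
    rw [List.map_map]
    exact List.map_congr_left (fun a _ => hm a)
  rw [h1, List.map_take, List.map_coe_finRange_eq_range, List.take_range, Nat.min_eq_left hj]

lemma flatMap_getElem_block {α β : Type*} (l : List α) (F : α → List β) (j i k : ℕ)
    (hj : j < l.length) (B : List β) (hB : F (l[j]'hj) = B) (hi : i < B.length)
    (hk : k = ((l.take j).flatMap F).length + i) (hkk : k < (l.flatMap F).length) :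
    (l.flatMap F)[k]'hkk = B[i]'hi := by
  subst hB
  subst hk
  have hsplit : l.flatMap F
      = (l.take j).flatMap F ++ (F (l[j]'hj) ++ (l.drop (j+1)).flatMap F) := by
    conv_lhs => rw [← List.take_append_drop j l]
    rw [List.flatMap_append, List.drop_eq_getElem_cons hj, List.flatMap_cons]
  rw [List.getElem_of_eq hsplit, List.getElem_append_right (Nat.le_add_right _ _)]
  simp only [Nat.add_sub_cancel_left]
  exact List.getElem_append_left hi



lemma some_or {α : Type*} (a : α) (x : Option α) : (some a).or x = some a := rfl

lemma map_tail' {α β : Type*} (f : α → β) (l : List α) : (l.map f).tail = l.tail.map f := by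
  cases l <;> rfl

lemma countP_eq_sum_map {α : Type*} (l : List α) (q : α → Bool) :
    l.countP q = (l.map (fun a => if q a then 1 else 0)).sum := by
  induction l with
  | nil => rfl
  | cons a l ih => rw [List.countP_cons, List.map_cons, List.sum_cons, ih]; omega

lemma countP_one_iff {α : Type*} (l : List α) (p : α → Prop) [DecidablePred p] :
    (l.countP fun a => decide (p a)) = 1 ↔ ∃! i : Fin l.length, p (l.get i) := by
  induction l with
  | nil =>
    constructor
    · intro h; rw [List.countP_nil] at h; omega
    · rintro ⟨i, -⟩; exact absurd i.isLt (by simp)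
  | cons a l ih =>
    rw [List.countP_cons]
    by_cases hp : p a
    · rw [if_pos (by simpa using hp)]
      constructor
      · intro h0
        have hz : (l.countP fun a => decide (p a)) = 0 := by omega
        refine ⟨⟨0, Nat.succ_pos _⟩, hp, ?_⟩
        intro i hi
        rcases Fin.eq_zero_or_eq_succ i with rfl | ⟨k, rfl⟩
        · exact Fin.ext (by simp)
        · exfalso
          rw [List.get_cons_succ'] at hi
          exact absurd (by simpa using hi)
            (by simpa using List.countP_eq_zero.mp hz _ (List.get_mem l k))
      · rintro ⟨i0, -, hu⟩
        have hz : (l.countP fun a => decide (p a)) = 0 := by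
          rw [List.countP_eq_zero]
          intro b hb hpb
          obtain ⟨k, hk⟩ := List.mem_iff_get.mp hb
          have h1 : (k.succ : Fin (l.length + 1)) = i0 := by
            refine hu k.succ ?_
            show p ((a :: l).get k.succ)
            rw [List.get_cons_succ']
            rw [hk]
            simpa using hpb
          have h2 : (⟨0, Nat.succ_pos _⟩ : Fin (l.length + 1)) = i0 :=
            hu ⟨0, Nat.succ_pos _⟩ hp
          rw [← h2] at h1
          exact absurd (congrArg Fin.val h1) (by simp)
        omega
    · rw [if_neg (by simpa using hp), Nat.add_zero, ih]
      constructor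
      · rintro ⟨i0, hi0, hu⟩
        refine ⟨i0.succ, by
          show p ((a :: l).get i0.succ)
          rw [List.get_cons_succ']; simpa using hi0, ?_⟩
        intro i hi
        rcases Fin.eq_zero_or_eq_succ i with rfl | ⟨k, rfl⟩
        · exact absurd (by simpa using hi) hp
        · have hi' : p (l.get k) := by
            have : (a :: l).get k.succ = l.get k := List.get_cons_succ'
            simpa [this] using hi
          rw [hu k hi']
      · rintro ⟨i0, hi0, hu⟩
        rcases Fin.eq_zero_or_eq_succ i0 with rfl | ⟨k, rfl⟩
        · exact absurd (by simpa using hi0) hp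
        · refine ⟨k, by
            have : (a :: l).get k.succ = l.get k := List.get_cons_succ'
            simpa [this] using hi0, ?_⟩
          intro i hi
          have := hu i.succ (by
            show p ((a :: l).get i.succ)
            rw [List.get_cons_succ']; simpa using hi)
          exact Fin.succ_injective _ this
  
lemma zip_tail_append_right {α : Type*} (l m : List α) (x : α × α)
    (hx : x ∈ l.zip l.tail) : x ∈ (l ++ m).zip (l ++ m).tail := by
  induction l with
  | nil => simp at hx
  | cons a l ih =>
    cases l with
    | nil => simp at hx
    | cons b l' =>
      rcases List.mem_cons.mp hx with h | h
      · subst h; exact List.mem_cons_self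
      · exact List.mem_cons_of_mem _ (ih h)

lemma zip_tail_append_left {α : Type*} (m l : List α) (x : α × α)
    (hx : x ∈ l.zip l.tail) : x ∈ (m ++ l).zip (m ++ l).tail := by
  induction m with
  | nil => exact hx
  | cons a m' ih =>
    rcases hml : m' ++ l with _ | ⟨c, L'⟩
    · rcases List.append_eq_nil_iff.mp hml with ⟨-, rfl⟩
      simp at hx
    · show x ∈ (a :: (m' ++ l)).zip (a :: (m' ++ l)).tail
      rw [hml]
      refine List.mem_cons_of_mem _ ?_
      have := ih
      rw [hml] at this
      exact this



lemma unit_left (G : OFG) : OIso (compO unitO (fun _ => G)) G := by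
  classical
  have hfin : ∀ j : Fin unitO.es.length, j = ⟨0, Nat.zero_lt_one⟩ :=
    fun j => Fin.ext (Nat.lt_one_iff.mp j.isLt)
  have hfr : List.finRange unitO.es.length = [⟨0, Nat.zero_lt_one⟩] := rfl
  have hf : ∀ x y, oGlueRel unitO (fun _ => G) x y →
      (fun x : unitO.V ⊕ Σ j : Fin unitO.es.length, G.V =>
        match x with
        | .inl b => (match b with | false => G.s | true => G.t)
        | .inr ⟨_, v⟩ => v) x
      = (fun x : unitO.V ⊕ Σ j : Fin unitO.es.length, G.V =>
        match x with
        | .inl b => (match b with | false => G.s | true => G.t)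
        | .inr ⟨_, v⟩ => v) y := by
    rintro x y ⟨j, (⟨rfl, rfl⟩ | ⟨rfl, rfl⟩)⟩ <;> rw [hfin j] <;> rfl
  refine ⟨⟨Quot.lift _ hf, fun v => Quot.mk _ (Sum.inr ⟨⟨0, Nat.zero_lt_one⟩, v⟩),
      ?_, fun v => rfl⟩, rfl, rfl, ?_⟩
  · intro q
    induction q using Quot.ind with
    | _ x =>
      rcases x with b | ⟨j, v⟩
      · cases b
        · exact (Quot.sound ⟨⟨0, Nat.zero_lt_one⟩, Or.inl ⟨rfl, rfl⟩⟩).symm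
        · exact (Quot.sound ⟨⟨0, Nat.zero_lt_one⟩, Or.inr ⟨rfl, rfl⟩⟩).symm
      · rw [hfin j]
  · show G.es = _
    simp only [compO, hfr, compBlock, compEmb, List.flatMap_cons, List.flatMap_nil,
      List.append_nil, List.map_map]
    exact (map_self _ _ fun e => rfl).symm

lemma unit_right (G : OFG) : OIso (compO G (fun _ => unitO)) G := by
  classical
  have hf : ∀ x y, oGlueRel G (fun _ => unitO) x y →
      (fun x : G.V ⊕ Σ j : Fin G.es.length, Bool =>
        match x with
        | .inl a => a
        | .inr ⟨j, b⟩ => (match b with | false => (G.es.get j).1 | true => (G.es.get j).2)) x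
      = (fun x : G.V ⊕ Σ j : Fin G.es.length, Bool =>
        match x with
        | .inl a => a
        | .inr ⟨j, b⟩ => (match b with | false => (G.es.get j).1 | true => (G.es.get j).2)) y := by
    rintro x y ⟨j, (⟨rfl, rfl⟩ | ⟨rfl, rfl⟩)⟩ <;> rfl
  refine ⟨⟨Quot.lift _ hf, fun a => Quot.mk _ (Sum.inl a), ?_, fun v => rfl⟩, rfl, rfl, ?_⟩
  · intro q
    induction q using Quot.ind with
    | _ x =>
      rcases x with a | ⟨j, b⟩
      · rfl
      · cases b
        · exact Quot.sound ⟨j, Or.inl ⟨rfl, rfl⟩⟩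
        · exact Quot.sound ⟨j, Or.inr ⟨rfl, rfl⟩⟩
  · show G.es = _
    simp only [compO, List.map_flatMap]
    show G.es = (List.finRange G.es.length).flatMap (fun j => [G.es.get j])
    rw [flatMap_single]
    exact (List.map_get_finRange G.es).symm



lemma equivar (G : OFG) (Gs : ℕ → OFG) (σ : Equiv.Perm (Fin G.es.length)) :
    OIso
      (compO (permO G σ)
        (fun j => if h : j < G.es.length then Gs ((σ ⟨j, h⟩ : Fin G.es.length) : ℕ)
          else Gs j))
      ⟨compV G Gs, (compO G Gs).s, (compO G Gs).t,
        (List.range G.es.length).flatMap (fun j =>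
          if h : j < G.es.length then
            compBlock G Gs (σ ⟨j, h⟩)
          else [])⟩ := by
  classical
  set P := permO G σ with hP
  have hn : True := trivial
  set Gs' : ℕ → OFG := fun j => if h : j < G.es.length then Gs ((σ ⟨j, h⟩ : Fin G.es.length) : ℕ) else Gs j
    with hGs'
  have h : P.es.length = G.es.length := by rw [hP]; simp [permO]
  have hG : ∀ j : Fin P.es.length, Gs' (j : ℕ) = Gs ((σ (Fin.cast h j) : Fin G.es.length) : ℕ) :=
    fun j => dif_pos (h ▸ j.isLt)
  have hG' : ∀ i : Fin G.es.length, Gs ((i : Fin G.es.length) : ℕ) = Gs' ((Fin.cast h.symm (σ.symm i) : Fin P.es.length) : ℕ) := by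
    intro i
    rw [hG (Fin.cast h.symm (σ.symm i))]
    congr 2
    exact (Equiv.apply_symm_apply σ i).symm
  have hE : ∀ j : Fin P.es.length, P.es.get j = G.es.get (σ (Fin.cast h j)) := by
    intro j
    show (List.ofFn (fun i => G.es.get (σ i))).get j = _
    erw [List.get_eq_getElem, List.getElem_ofFn]
    rfl
  -- forward map on generators
  set F : P.V ⊕ (Σ j : Fin P.es.length, (Gs' (j : ℕ)).V) → compV G Gs :=
    fun x => match x with
    | .inl a => Quot.mk (oGlueRel G Gs) (Sum.inl a)
    | .inr ⟨j, v⟩ => Quot.mk (oGlueRel G Gs)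
        (Sum.inr ⟨σ (Fin.cast h j), cast (congrArg OFG.V (hG j)) v⟩) with hF
  set B : G.V ⊕ (Σ i : Fin G.es.length, (Gs (i : ℕ)).V) → compV P Gs' :=
    fun x => match x with
    | .inl a => Quot.mk (oGlueRel P Gs') (Sum.inl a)
    | .inr ⟨i, w⟩ => Quot.mk (oGlueRel P Gs')
        (Sum.inr ⟨Fin.cast h.symm (σ.symm i), cast (congrArg OFG.V (hG' i)) w⟩) with hB
  have hFresp : ∀ x y, oGlueRel P Gs' x y → F x = F y := by
    rintro x y ⟨j, (⟨rfl, rfl⟩ | ⟨rfl, rfl⟩)⟩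
    · show Quot.mk _ (Sum.inl (P.es.get j).1) = _
      rw [show (P.es.get j).1 = (G.es.get (σ (Fin.cast h j))).1 from congrArg Prod.fst (hE j)]
      refine Quot.sound ⟨σ (Fin.cast h j), Or.inl ⟨rfl, ?_⟩⟩
      exact congrArg (fun w => Sum.inr (⟨σ (Fin.cast h j), w⟩ :
        Σ i : Fin G.es.length, (Gs (i : ℕ)).V)) (cast_s (hG j))
    · show Quot.mk _ (Sum.inl (P.es.get j).2) = _
      rw [show (P.es.get j).2 = (G.es.get (σ (Fin.cast h j))).2 from congrArg Prod.snd (hE j)]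
      refine Quot.sound ⟨σ (Fin.cast h j), Or.inr ⟨rfl, ?_⟩⟩
      exact congrArg (fun w => Sum.inr (⟨σ (Fin.cast h j), w⟩ :
        Σ i : Fin G.es.length, (Gs (i : ℕ)).V)) (cast_t (hG j))
  have hBresp : ∀ x y, oGlueRel G Gs x y → B x = B y := by
    rintro x y ⟨i, (⟨rfl, rfl⟩ | ⟨rfl, rfl⟩)⟩
    · show Quot.mk _ (Sum.inl (G.es.get i).1) = _
      have : (G.es.get i).1 = (P.es.get (Fin.cast h.symm (σ.symm i))).1 := by
        rw [hE]
        congr 2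
        exact (Equiv.apply_symm_apply σ i).symm
      rw [this]
      refine Quot.sound ⟨Fin.cast h.symm (σ.symm i), Or.inl ⟨rfl, ?_⟩⟩
      exact congrArg (fun w => Sum.inr (⟨Fin.cast h.symm (σ.symm i), w⟩ :
        Σ j : Fin P.es.length, (Gs' (j : ℕ)).V)) (cast_s (hG' i))
    · show Quot.mk _ (Sum.inl (G.es.get i).2) = _
      have : (G.es.get i).2 = (P.es.get (Fin.cast h.symm (σ.symm i))).2 := by
        rw [hE]
        congr 2
        exact (Equiv.apply_symm_apply σ i).symm
      rw [this]
      refine Quot.sound ⟨Fin.cast h.symm (σ.symm i), Or.inr ⟨rfl, ?_⟩⟩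
      exact congrArg (fun w => Sum.inr (⟨Fin.cast h.symm (σ.symm i), w⟩ :
        Σ j : Fin P.es.length, (Gs' (j : ℕ)).V)) (cast_t (hG' i))
  refine ⟨⟨Quot.lift F hFresp, Quot.lift B hBresp, ?_, ?_⟩, rfl, rfl, ?_⟩
  · intro q
    induction q using Quot.ind with
    | _ x =>
      rcases x with a | ⟨j, v⟩
      · rfl
      · exact mk_sigma_eq (n := P.es.length) (Ks := Gs')
          (fun p => Quot.mk (oGlueRel P Gs')
            (Sum.inr p : P.V ⊕ Σ j : Fin P.es.length, (Gs' (j : ℕ)).V))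
          (Fin.ext (show ((σ.symm (σ (Fin.cast h j))) : ℕ) = (j : ℕ) by
            rw [Equiv.symm_apply_apply]; rfl))
          ((cast_heq _ _).trans (cast_heq _ _))
  · intro q
    induction q using Quot.ind with
    | _ x =>
      rcases x with a | ⟨i, w⟩
      · rfl
      · exact mk_sigma_eq (n := G.es.length) (Ks := Gs)
          (fun p => Quot.mk (oGlueRel G Gs)
            (Sum.inr p : G.V ⊕ Σ i : Fin G.es.length, (Gs (i : ℕ)).V))
          (Equiv.apply_symm_apply σ i)
          ((cast_heq _ _).trans (cast_heq _ _))
  · show _ = List.map (Prod.map (Quot.lift F hFresp) (Quot.lift F hFresp))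
        ((List.finRange P.es.length).flatMap (compBlock P Gs'))
    erw [List.map_flatMap]
    have hblock : ∀ j : Fin P.es.length,
        List.map (Prod.map (Quot.lift F hFresp) (Quot.lift F hFresp)) (compBlock P Gs' j)
          = compBlock G Gs (σ (Fin.cast h j)) := by
      intro j
      show List.map _ (List.map _ (Gs' (j : ℕ)).es) = _
      erw [List.map_map]
      exact block_cast G Gs (σ (Fin.cast h j)) (Gs' (j : ℕ)) (hG j)
    rw [show (fun j => List.map (Prod.map (Quot.lift F hFresp) (Quot.lift F hFresp))
        (compBlock P Gs' j)) = fun j : Fin P.es.length => compBlock G Gs (σ (Fin.cast h j))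
      from funext hblock]
    rw [flatMap_finRange_cast h (fun j : Fin P.es.length => compBlock G Gs (σ (Fin.cast h j)))]
    refine flatMap_range_eq_finRange G.es.length _ _ ?_
    intro j
    show (if hj : (j : ℕ) < G.es.length then compBlock G Gs (σ ⟨(j : ℕ), hj⟩) else []) = _
    rw [dif_pos j.isLt]
    rfl



lemma assoc (G : OFG) (Gs Hs : ℕ → OFG) :
    OIso (compO (compO G Gs) Hs)
      (compO G (fun j => compO (Gs j) (fun i => Hs (offsetO Gs j + i)))) := by
  classical
  set base := compO G Gs with hbase
  set Ks : ℕ → OFG := fun j => compO (Gs j) (fun i => Hs (offsetO Gs j + i)) with hKs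
  set Hj : (j : Fin G.es.length) → ℕ → OFG :=
    fun j i => Hs (offsetO Gs (j : ℕ) + i) with hHj
  have hM : base.es.length
      = ((List.range G.es.length).map (fun a => (Gs a).es.length)).sum := by
    show ((List.finRange G.es.length).flatMap (compBlock G Gs)).length = _
    rw [List.length_flatMap, ← List.map_coe_finRange_eq_range, List.map_map]
    exact congrArg List.sum (List.map_congr_left (fun a _ => by simp [compBlock]))
  have hoff : ∀ (j : Fin G.es.length) (i : Fin (Gs (j : ℕ)).es.length),
      offsetO Gs (j : ℕ) + (i : ℕ) < base.es.length := by
    intro j i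
    rw [hM]
    exact off_idx_lt _ j.isLt i.isLt
  set idx : (j : Fin G.es.length) → Fin (Gs (j : ℕ)).es.length → Fin base.es.length :=
    fun j i => ⟨offsetO Gs (j : ℕ) + (i : ℕ), hoff j i⟩ with hidx
  have hbase_get : ∀ (j : Fin G.es.length) (i : Fin (Gs (j : ℕ)).es.length),
      base.es.get (idx j i) = (compEmb G Gs j ((Gs (j : ℕ)).es.get i).1,
        compEmb G Gs j ((Gs (j : ℕ)).es.get i).2) := by
    intro j i
    have hlen : (((List.finRange G.es.length).take (j : ℕ)).flatMap (compBlock G Gs)).length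
        = offsetO Gs (j : ℕ) :=
      take_flatMap_length _ _ (le_of_lt j.isLt) _ _ (fun a => by simp [compBlock])
    have hj' : (j : ℕ) < (List.finRange G.es.length).length := by
      simpa using j.isLt
    have hfr : (List.finRange G.es.length)[(j : ℕ)]'hj' = j := by
      rw [List.getElem_finRange]
      exact Fin.ext rfl
    show ((List.finRange G.es.length).flatMap (compBlock G Gs)).get (idx j i) = _
    rw [List.get_eq_getElem]
    refine (flatMap_getElem_block (List.finRange G.es.length) (compBlock G Gs)
      (j : ℕ) (i : ℕ) ((idx j i : ℕ)) hj' (compBlock G Gs j)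
      (congrArg (compBlock G Gs) hfr)
      (by simpa [compBlock] using i.isLt)
      (by rw [hlen])
      ((idx j i).isLt)).trans ?_
    simp [compBlock, List.get_eq_getElem]
  -- forward pieces (target → source direction is `Bfun`; source → target is `ffun`)
  set gj : (j : Fin G.es.length) →
      ((Gs (j : ℕ)).V ⊕ Σ i : Fin (Gs (j : ℕ)).es.length, (Hj j (i : ℕ)).V) → compV base Hs :=
    fun j x => match x with
    | .inl v => Quot.mk (oGlueRel base Hs)
        (Sum.inl (Quot.mk (oGlueRel G Gs) (Sum.inr ⟨j, v⟩)))
    | .inr ⟨i, w⟩ => Quot.mk (oGlueRel base Hs) (Sum.inr ⟨idx j i, w⟩) with hgj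
  have hgjresp : ∀ (j : Fin G.es.length) x y, oGlueRel (Gs (j : ℕ)) (Hj j) x y →
      gj j x = gj j y := by
    rintro j x y ⟨i, (⟨rfl, rfl⟩ | ⟨rfl, rfl⟩)⟩
    · show Quot.mk _ (Sum.inl (Quot.mk (oGlueRel G Gs)
        (Sum.inr ⟨j, ((Gs (j : ℕ)).es.get i).1⟩))) = _
      rw [show Quot.mk (oGlueRel G Gs) (Sum.inr ⟨j, ((Gs (j : ℕ)).es.get i).1⟩)
          = (base.es.get (idx j i)).1 from (congrArg Prod.fst (hbase_get j i)).symm]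
      exact Quot.sound ⟨idx j i, Or.inl ⟨rfl, rfl⟩⟩
    · show Quot.mk _ (Sum.inl (Quot.mk (oGlueRel G Gs)
        (Sum.inr ⟨j, ((Gs (j : ℕ)).es.get i).2⟩))) = _
      rw [show Quot.mk (oGlueRel G Gs) (Sum.inr ⟨j, ((Gs (j : ℕ)).es.get i).2⟩)
          = (base.es.get (idx j i)).2 from (congrArg Prod.snd (hbase_get j i)).symm]
      exact Quot.sound ⟨idx j i, Or.inr ⟨rfl, rfl⟩⟩
  set Bfun : (G.V ⊕ Σ j : Fin G.es.length, (Ks (j : ℕ)).V) → compV base Hs :=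
    fun x => match x with
    | .inl a => Quot.mk (oGlueRel base Hs)
        (Sum.inl (Quot.mk (oGlueRel G Gs) (Sum.inl a)))
    | .inr ⟨j, q⟩ => Quot.lift (gj j) (hgjresp j) q with hBfun
  have hBresp : ∀ x y, oGlueRel G Ks x y → Bfun x = Bfun y := by
    rintro x y ⟨j, (⟨rfl, rfl⟩ | ⟨rfl, rfl⟩)⟩
    · exact congrArg (fun q => Quot.mk (oGlueRel base Hs) (Sum.inl q))
        (Quot.sound ⟨j, Or.inl ⟨rfl, rfl⟩⟩)
    · exact congrArg (fun q => Quot.mk (oGlueRel base Hs) (Sum.inl q))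
        (Quot.sound ⟨j, Or.inr ⟨rfl, rfl⟩⟩)
  -- decomposition of a global index
  have hdec : ∀ e : Fin base.es.length, ∃ j : Fin G.es.length,
      ∃ i : Fin (Gs (j : ℕ)).es.length, offsetO Gs (j : ℕ) + (i : ℕ) = (e : ℕ) := by
    intro e
    obtain ⟨j, hj, i, hi, hsum⟩ :=
      off_decomp (fun a => (Gs a).es.length) G.es.length (e : ℕ) (hM ▸ e.isLt)
    exact ⟨⟨j, hj⟩, ⟨i, hi⟩, hsum⟩
  choose jd idd hd using hdec
  have hidx_eq : ∀ e, idx (jd e) (idd e) = e := fun e => Fin.ext (hd e)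
  set g0 : (G.V ⊕ Σ j : Fin G.es.length, (Gs (j : ℕ)).V) → compV G Ks :=
    fun x => match x with
    | .inl a => Quot.mk (oGlueRel G Ks) (Sum.inl a)
    | .inr ⟨j, v⟩ => Quot.mk (oGlueRel G Ks)
        (Sum.inr ⟨j, Quot.mk (oGlueRel (Gs (j : ℕ)) (Hj j)) (Sum.inl v)⟩) with hg0
  have hg0resp : ∀ x y, oGlueRel G Gs x y → g0 x = g0 y := by
    rintro x y ⟨j, (⟨rfl, rfl⟩ | ⟨rfl, rfl⟩)⟩
    · exact Quot.sound ⟨j, Or.inl ⟨rfl, rfl⟩⟩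
    · exact Quot.sound ⟨j, Or.inr ⟨rfl, rfl⟩⟩
  have hHs_cast : ∀ e : Fin base.es.length,
      Hs ((e : Fin base.es.length) : ℕ) = Hj (jd e) ((idd e : ℕ)) :=
    fun e => congrArg Hs (hd e).symm
  set ffun : (base.V ⊕ Σ e : Fin base.es.length, (Hs (e : ℕ)).V) → compV G Ks :=
    fun x => match x with
    | .inl q => Quot.lift g0 hg0resp q
    | .inr ⟨e, w⟩ => Quot.mk (oGlueRel G Ks)
        (Sum.inr ⟨jd e, Quot.mk (oGlueRel (Gs ((jd e : ℕ))) (Hj (jd e)))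
          (Sum.inr ⟨idd e, cast (congrArg OFG.V (hHs_cast e)) w⟩)⟩) with hffun
  have quotB_eq : ∀ (j j' : Fin G.es.length) (i : Fin (Gs (j : ℕ)).es.length)
      (i' : Fin (Gs (j' : ℕ)).es.length), (j : ℕ) = (j' : ℕ) → (i : ℕ) = (i' : ℕ) →
      ∀ (w : (Hj j (i : ℕ)).V) (w' : (Hj j' (i' : ℕ)).V), HEq w w' →
      Quot.mk (oGlueRel G Ks) (Sum.inr ⟨j, Quot.mk (oGlueRel (Gs (j : ℕ)) (Hj j))
        (Sum.inr ⟨i, w⟩)⟩)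
      = Quot.mk (oGlueRel G Ks) (Sum.inr ⟨j', Quot.mk (oGlueRel (Gs (j' : ℕ)) (Hj j'))
        (Sum.inr ⟨i', w'⟩)⟩) := by
    intro j j' i i' hj hi w w' hw
    have hj2 : j = j' := Fin.ext hj
    subst hj2
    have hi2 : i = i' := Fin.ext hi
    subst hi2
    rw [eq_of_heq hw]
  have hffunresp : ∀ x y, oGlueRel base Hs x y → ffun x = ffun y := by
    rintro x y ⟨e, (⟨rfl, rfl⟩ | ⟨rfl, rfl⟩)⟩
    · have hb := hbase_get (jd e) (idd e)
      rw [hidx_eq e] at hb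
      show Quot.lift g0 hg0resp ((base.es.get e).1) = _
      rw [show (base.es.get e).1
          = compEmb G Gs (jd e) (((Gs ((jd e : ℕ))).es.get (idd e)).1)
          from congrArg Prod.fst hb]
      have h2 : Quot.mk (oGlueRel (Gs ((jd e : ℕ))) (Hj (jd e)))
          (Sum.inl (((Gs ((jd e : ℕ))).es.get (idd e)).1))
          = Quot.mk (oGlueRel (Gs ((jd e : ℕ))) (Hj (jd e)))
            (Sum.inr ⟨idd e, cast (congrArg OFG.V (hHs_cast e)) (Hs (e : ℕ)).s⟩) := by
        rw [show cast (congrArg OFG.V (hHs_cast e)) (Hs (e : ℕ)).s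
          = (Hj (jd e) ((idd e : ℕ))).s from cast_s (hHs_cast e)]
        exact Quot.sound ⟨idd e, Or.inl ⟨rfl, rfl⟩⟩
      exact congrArg (fun q => Quot.mk (oGlueRel G Ks)
        (Sum.inr (⟨jd e, q⟩ : Σ j : Fin G.es.length, (Ks (j : ℕ)).V))) h2
    · have hb := hbase_get (jd e) (idd e)
      rw [hidx_eq e] at hb
      show Quot.lift g0 hg0resp ((base.es.get e).2) = _
      rw [show (base.es.get e).2
          = compEmb G Gs (jd e) (((Gs ((jd e : ℕ))).es.get (idd e)).2)
          from congrArg Prod.snd hb]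
      have h2 : Quot.mk (oGlueRel (Gs ((jd e : ℕ))) (Hj (jd e)))
          (Sum.inl (((Gs ((jd e : ℕ))).es.get (idd e)).2))
          = Quot.mk (oGlueRel (Gs ((jd e : ℕ))) (Hj (jd e)))
            (Sum.inr ⟨idd e, cast (congrArg OFG.V (hHs_cast e)) (Hs (e : ℕ)).t⟩) := by
        rw [show cast (congrArg OFG.V (hHs_cast e)) (Hs (e : ℕ)).t
          = (Hj (jd e) ((idd e : ℕ))).t from cast_t (hHs_cast e)]
        exact Quot.sound ⟨idd e, Or.inr ⟨rfl, rfl⟩⟩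
      exact congrArg (fun q => Quot.mk (oGlueRel G Ks)
        (Sum.inr (⟨jd e, q⟩ : Σ j : Fin G.es.length, (Ks (j : ℕ)).V))) h2
  have hphi : ∀ (j : Fin G.es.length) (i : Fin (Gs (j : ℕ)).es.length)
      (w : (Hj j (i : ℕ)).V),
      Quot.lift ffun hffunresp (Quot.mk (oGlueRel base Hs) (Sum.inr ⟨idx j i, w⟩))
        = Quot.mk (oGlueRel G Ks) (Sum.inr ⟨j, Quot.mk (oGlueRel (Gs (j : ℕ)) (Hj j))
            (Sum.inr ⟨i, w⟩)⟩) := by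
    intro j i w
    have hinj := off_inj (fun a => (Gs a).es.length)
      (idd (idx j i)).isLt i.isLt (hd (idx j i))
    exact quotB_eq _ _ _ _ (congrArg Fin.val (Fin.ext hinj.1 :
        jd (idx j i) = j)) hinj.2 _ w (cast_heq _ _)
  refine ⟨⟨Quot.lift ffun hffunresp, Quot.lift Bfun hBresp, ?_, ?_⟩, rfl, rfl, ?_⟩
  · -- left inverse : Bfun ∘ ffun = id
    intro q
    induction q using Quot.ind with
    | _ x =>
      rcases x with q0 | ⟨e, w⟩
      · induction q0 using Quot.ind with
        | _ y =>
          rcases y with a | ⟨j, v⟩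
          · rfl
          · rfl
      · show Quot.mk (oGlueRel base Hs) (Sum.inr ⟨idx (jd e) (idd e), _⟩)
          = Quot.mk (oGlueRel base Hs) (Sum.inr ⟨e, w⟩)
        exact mk_sigma_eq (n := base.es.length) (Ks := Hs)
          (fun p => Quot.mk (oGlueRel base Hs)
            (Sum.inr p : base.V ⊕ Σ e : Fin base.es.length, (Hs (e : ℕ)).V))
          (hidx_eq e) (cast_heq _ _)
  · -- right inverse : ffun ∘ Bfun = id
    intro q
    induction q using Quot.ind with
    | _ x =>
      rcases x with a | ⟨j, qj⟩
      · rfl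
      · induction qj using Quot.ind with
        | _ y =>
          rcases y with v | ⟨i, w⟩
          · rfl
          · exact hphi j i w
  · -- edge lists
    show (List.finRange G.es.length).flatMap (compBlock G Ks)
      = List.map (Prod.map (Quot.lift ffun hffunresp) (Quot.lift ffun hffunresp))
          ((List.finRange base.es.length).flatMap (compBlock base Hs))
    erw [List.map_flatMap]
    have hstep1 : (List.range base.es.length).flatMap
        (fun e => if h : e < base.es.length then
          List.map (Prod.map (Quot.lift ffun hffunresp) (Quot.lift ffun hffunresp))
            (compBlock base Hs ⟨e, h⟩) else [])
        = (List.finRange base.es.length).flatMap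
            (fun e => List.map (Prod.map (Quot.lift ffun hffunresp) (Quot.lift ffun hffunresp))
              (compBlock base Hs e)) := by
      refine flatMap_range_eq_finRange _ _ _ ?_
      intro e
      rw [dif_pos e.isLt]
    rw [← hstep1,
      show List.range base.es.length
          = List.range' 0 (((List.range G.es.length).map (fun a => (Gs a).es.length)).sum)
        from by rw [← hM, List.range_eq_range'],
      flatMap_decomp _ (fun a => (Gs a).es.length) G.es.length 0]
    simp only [Nat.zero_add]
    refine (flatMap_range_eq_finRange G.es.length (compBlock G Ks) _ ?_).symm
    intro j
    symm
    -- per-block equality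
    rw [List.range'_eq_map_range, List.flatMap_map]
    beta_reduce
    have hstep2 : (List.range (Gs (j : ℕ)).es.length).flatMap
        (fun i => if h : (List.map (fun a => (Gs a).es.length) (List.range (j : ℕ))).sum + i
              < base.es.length then
          List.map (Prod.map (Quot.lift ffun hffunresp) (Quot.lift ffun hffunresp))
            (compBlock base Hs
              ⟨(List.map (fun a => (Gs a).es.length) (List.range (j : ℕ))).sum + i, h⟩)
          else [])
        = (List.finRange (Gs (j : ℕ)).es.length).flatMap
            (fun i => List.map (Prod.map (Quot.lift ffun hffunresp) (Quot.lift ffun hffunresp))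
              (compBlock base Hs (idx j i))) := by
      refine flatMap_range_eq_finRange _ _ _ ?_
      intro i
      rw [dif_pos (show (List.map (fun a => (Gs a).es.length) (List.range (j : ℕ))).sum + (i : ℕ)
        < base.es.length from hoff j i)]
      rfl
    rw [hstep2]
    show compBlock G Ks j = _
    have hKsj : (Ks (j : ℕ)).es
        = (List.finRange (Gs (j : ℕ)).es.length).flatMap (compBlock (Gs (j : ℕ)) (Hj j)) := rfl
    show List.map (fun e => (compEmb G Ks j e.1, compEmb G Ks j e.2)) (Ks (j : ℕ)).es = _
    erw [hKsj, List.map_flatMap]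
    refine List.flatMap_congr ?_
    intro i _
    show List.map _ (List.map _ (Hj j (i : ℕ)).es)
      = List.map _ (List.map _ (Hs ((idx j i : ℕ))).es)
    erw [List.map_map, List.map_map]
    refine List.map_congr_left ?_
    intro f _
    refine Prod.ext ?_ ?_
    · exact (hphi j i f.1).symm
    · exact (hphi j i f.2).symm



lemma flow_comp (G : OFG) (Gs : ℕ → OFG) (hG : IsFlowO G)
    (hGs : ∀ j < G.es.length, IsFlowO (Gs j)) : IsFlowO (compO G Gs) := by
  classical
  obtain ⟨hG1, hG2, hG3, hG4, hG5⟩ := hG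
  have FJ : ∀ j : Fin G.es.length, IsFlowO (Gs (j : ℕ)) := fun j => hGs (j : ℕ) j.isLt
  have hlenpos : ∀ j : Fin G.es.length, 0 < (Gs (j : ℕ)).es.length := by
    intro j
    obtain ⟨i, -, -⟩ := (FJ j).2.2.1
    exact lt_of_le_of_lt (Nat.zero_le _) i.isLt
  have hst : ∀ j : Fin G.es.length, (Gs (j : ℕ)).s ≠ (Gs (j : ℕ)).t := by
    intro j
    obtain ⟨i, hi, -⟩ := (FJ j).2.2.1
    intro hcontra
    exact (FJ j).2.1 _ (List.get_mem _ _) (hi.trans hcontra)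
  set N : (G.V ⊕ Σ j : Fin G.es.length, (Gs (j : ℕ)).V) →
      (G.V ⊕ Σ j : Fin G.es.length, (Gs (j : ℕ)).V) :=
    fun x => match x with
    | .inl a => .inl a
    | .inr ⟨j, v⟩ =>
        if v = (Gs (j : ℕ)).s then .inl ((G.es.get j).1)
        else if v = (Gs (j : ℕ)).t then .inl ((G.es.get j).2)
        else .inr ⟨j, v⟩ with hNdef
  have hNs : ∀ j : Fin G.es.length,
      N (Sum.inr ⟨j, (Gs (j : ℕ)).s⟩) = Sum.inl ((G.es.get j).1) := by
    intro j
    show (if (Gs (j : ℕ)).s = (Gs (j : ℕ)).s then _ else _) = _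
    rw [if_pos rfl]
  have hNt : ∀ j : Fin G.es.length,
      N (Sum.inr ⟨j, (Gs (j : ℕ)).t⟩) = Sum.inl ((G.es.get j).2) := by
    intro j
    show (if (Gs (j : ℕ)).t = (Gs (j : ℕ)).s then _
      else if (Gs (j : ℕ)).t = (Gs (j : ℕ)).t then _ else _) = _
    rw [if_neg (fun hh => hst j hh.symm), if_pos rfl]
  have hNo : ∀ (j : Fin G.es.length) (v : (Gs (j : ℕ)).V), v ≠ (Gs (j : ℕ)).s →
      v ≠ (Gs (j : ℕ)).t → N (Sum.inr ⟨j, v⟩) = Sum.inr ⟨j, v⟩ := by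
    intro j v h1 h2
    show (if v = (Gs (j : ℕ)).s then _ else if v = (Gs (j : ℕ)).t then _ else _) = _
    rw [if_neg h1, if_neg h2]
  have hNresp : ∀ x y, oGlueRel G Gs x y → N x = N y := by
    rintro x y ⟨j, (⟨rfl, rfl⟩ | ⟨rfl, rfl⟩)⟩
    · exact (hNs j).symm
    · exact (hNt j).symm
  have mkN : ∀ x, Quot.mk (oGlueRel G Gs) (N x) = Quot.mk (oGlueRel G Gs) x := by
    intro x
    rcases x with a | ⟨j, v⟩
    · rfl
    · by_cases h1 : v = (Gs (j : ℕ)).s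
      · subst h1
        rw [hNs j]
        exact Quot.sound ⟨j, Or.inl ⟨rfl, rfl⟩⟩
      · by_cases h2 : v = (Gs (j : ℕ)).t
        · subst h2
          rw [hNt j]
          exact Quot.sound ⟨j, Or.inr ⟨rfl, rfl⟩⟩
        · rw [hNo j v h1 h2]
  have mkEq : ∀ x y, (Quot.mk (oGlueRel G Gs) x = Quot.mk (oGlueRel G Gs) y) ↔ N x = N y := by
    intro x y
    constructor
    · intro h
      exact congrArg (Quot.lift N hNresp) h
    · intro h
      rw [← mkN x, ← mkN y, h]
  -- key characterizations of being glued to the global source / target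
  have hkeyS : ∀ (j : Fin G.es.length) (v : (Gs (j : ℕ)).V),
      (Quot.mk (oGlueRel G Gs) (Sum.inr ⟨j, v⟩) = Quot.mk (oGlueRel G Gs) (Sum.inl G.s))
        ↔ (v = (Gs (j : ℕ)).s ∧ (G.es.get j).1 = G.s) := by
    intro j v
    rw [mkEq]
    constructor
    · intro h
      by_cases h1 : v = (Gs (j : ℕ)).s
      · subst h1
        rw [hNs j] at h
        exact ⟨rfl, Sum.inl.inj h⟩
      · by_cases h2 : v = (Gs (j : ℕ)).t
        · subst h2
          rw [hNt j] at h
          exact absurd (Sum.inl.inj h) (hG1 _ (List.get_mem _ _))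
        · rw [hNo j v h1 h2] at h
          exact absurd h (by simp)
    · rintro ⟨rfl, h2⟩
      rw [hNs j]
      show _ = Sum.inl G.s
      rw [h2]
  have hkeyT : ∀ (j : Fin G.es.length) (v : (Gs (j : ℕ)).V),
      (Quot.mk (oGlueRel G Gs) (Sum.inr ⟨j, v⟩) = Quot.mk (oGlueRel G Gs) (Sum.inl G.t))
        ↔ (v = (Gs (j : ℕ)).t ∧ (G.es.get j).2 = G.t) := by
    intro j v
    rw [mkEq]
    constructor
    · intro h
      by_cases h1 : v = (Gs (j : ℕ)).s
      · subst h1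
        rw [hNs j] at h
        exact absurd (Sum.inl.inj h) (hG2 _ (List.get_mem _ _))
      · by_cases h2 : v = (Gs (j : ℕ)).t
        · subst h2
          rw [hNt j] at h
          exact ⟨rfl, Sum.inl.inj h⟩
        · rw [hNo j v h1 h2] at h
          exact absurd h (by simp)
    · rintro ⟨rfl, h2⟩
      rw [hNt j]
      show _ = Sum.inl G.t
      rw [h2]
  have hmemC : ∀ e, e ∈ (compO G Gs).es → ∃ (j : Fin G.es.length) (f : _),
      f ∈ (Gs (j : ℕ)).es ∧ e = (compEmb G Gs j f.1, compEmb G Gs j f.2) := by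
    intro e he
    obtain ⟨j, -, hej⟩ := List.mem_flatMap.mp he
    obtain ⟨f, hf, hfe⟩ := List.mem_map.mp hej
    exact ⟨j, f, hf, hfe.symm⟩
  refine ⟨?_, ?_, ?_, ?_, ?_⟩
  · -- no edge into the source
    intro e he hcontra
    obtain ⟨j, f, hf, rfl⟩ := hmemC e he
    obtain ⟨h1, h2⟩ := (hkeyS j f.2).mp hcontra
    exact (FJ j).1 f hf h1
  · -- no edge out of the target
    intro e he hcontra
    obtain ⟨j, f, hf, rfl⟩ := hmemC e he
    obtain ⟨h1, h2⟩ := (hkeyT j f.1).mp hcontra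
    exact (FJ j).2.1 f hf h1
  · -- unique entry edge
    apply (countP_one_iff (compO G Gs).es (fun e => e.1 = (compO G Gs).s)).mp
    have hblock : ∀ j : Fin G.es.length,
        List.countP (fun e => decide (e.1 = (compO G Gs).s)) (compBlock G Gs j)
          = if (G.es.get j).1 = G.s then 1 else 0 := by
      intro j
      show List.countP _ (List.map _ (Gs (j : ℕ)).es) = _
      rw [List.countP_map]
      by_cases hj : (G.es.get j).1 = G.s
      · rw [if_pos hj]
        have heq : ∀ f ∈ (Gs (j : ℕ)).es,
            ((fun e : compV G Gs × compV G Gs => decide (e.1 = (compO G Gs).s)) ∘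
              (fun e => (compEmb G Gs j e.1, compEmb G Gs j e.2))) f
            = (fun f : (Gs (j : ℕ)).V × (Gs (j : ℕ)).V =>
                decide (f.1 = (Gs (j : ℕ)).s)) f := by
          intro f _
          simp only [Function.comp_apply]
          exact decide_eq_decide.mpr
            ⟨fun h => ((hkeyS j f.1).mp h).1, fun h => (hkeyS j f.1).mpr ⟨h, hj⟩⟩
        erw [List.countP_congr (fun x hx => Bool.eq_iff_iff.mp (heq x hx))]
        exact (countP_one_iff _ _).mpr (FJ j).2.2.1
      · rw [if_neg hj, List.countP_eq_zero]
        intro f hf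
        simp only [Function.comp_apply, decide_eq_true_iff]
        intro hcon
        exact hj ((hkeyS j f.1).mp hcon).2
    erw [show (compO G Gs).es = (List.finRange G.es.length).flatMap (compBlock G Gs) from rfl,
      List.countP_flatMap]
    refine Eq.trans (congrArg List.sum (List.map_congr_left
      (g := fun j : Fin G.es.length => if decide ((G.es.get j).1 = G.s) then 1 else 0)
      (fun j _ => ?_))) ?_
    · show List.countP (fun e => decide (e.1 = (compO G Gs).s)) (compBlock G Gs j) = _
      rw [hblock j]
      by_cases hj : (G.es.get j).1 = G.s
      · simp [hj]
      · simp [hj]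
    rw [← countP_eq_sum_map]
    have h2 : List.countP (fun j : Fin G.es.length => decide ((G.es.get j).1 = G.s))
        (List.finRange G.es.length)
        = List.countP (fun e => decide (e.1 = G.s)) G.es := by
      conv_rhs => rw [← List.map_get_finRange G.es]
      rw [List.countP_map]
      rfl
    rw [h2]
    exact (countP_one_iff _ _).mpr hG3
  · -- unique exit edge
    apply (countP_one_iff (compO G Gs).es (fun e => e.2 = (compO G Gs).t)).mp
    have hblock : ∀ j : Fin G.es.length,
        List.countP (fun e => decide (e.2 = (compO G Gs).t)) (compBlock G Gs j)
          = if (G.es.get j).2 = G.t then 1 else 0 := by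
      intro j
      show List.countP _ (List.map _ (Gs (j : ℕ)).es) = _
      rw [List.countP_map]
      by_cases hj : (G.es.get j).2 = G.t
      · rw [if_pos hj]
        have heq : ∀ f ∈ (Gs (j : ℕ)).es,
            ((fun e : compV G Gs × compV G Gs => decide (e.2 = (compO G Gs).t)) ∘
              (fun e => (compEmb G Gs j e.1, compEmb G Gs j e.2))) f
            = (fun f : (Gs (j : ℕ)).V × (Gs (j : ℕ)).V =>
                decide (f.2 = (Gs (j : ℕ)).t)) f := by
          intro f _
          simp only [Function.comp_apply]
          exact decide_eq_decide.mpr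
            ⟨fun h => ((hkeyT j f.2).mp h).1, fun h => (hkeyT j f.2).mpr ⟨h, hj⟩⟩
        erw [List.countP_congr (fun x hx => Bool.eq_iff_iff.mp (heq x hx))]
        exact (countP_one_iff _ _).mpr (FJ j).2.2.2.1
      · rw [if_neg hj, List.countP_eq_zero]
        intro f hf
        simp only [Function.comp_apply, decide_eq_true_iff]
        intro hcon
        exact hj ((hkeyT j f.2).mp hcon).2
    erw [show (compO G Gs).es = (List.finRange G.es.length).flatMap (compBlock G Gs) from rfl,
      List.countP_flatMap]
    refine Eq.trans (congrArg List.sum (List.map_congr_left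
      (g := fun j : Fin G.es.length => if decide ((G.es.get j).2 = G.t) then 1 else 0)
      (fun j _ => ?_))) ?_
    · show List.countP (fun e => decide (e.2 = (compO G Gs).t)) (compBlock G Gs j) = _
      rw [hblock j]
      by_cases hj : (G.es.get j).2 = G.t
      · simp [hj]
      · simp [hj]
    rw [← countP_eq_sum_map]
    have h2 : List.countP (fun j : Fin G.es.length => decide ((G.es.get j).2 = G.t))
        (List.finRange G.es.length)
        = List.countP (fun e => decide (e.2 = G.t)) G.es := by
      conv_rhs => rw [← List.map_get_finRange G.es]
      rw [List.countP_map]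
      rfl
    rw [h2]
    exact (countP_one_iff _ _).mpr hG4
  · -- every edge lies on a source-to-target path
    have hCedge : ∀ (j : Fin G.es.length) (f : _), f ∈ (Gs (j : ℕ)).es →
        (compEmb G Gs j f.1, compEmb G Gs j f.2) ∈ (compO G Gs).es := by
      intro j f hf
      exact List.mem_flatMap.mpr ⟨j, List.mem_finRange j, List.mem_map.mpr ⟨f, hf, rfl⟩⟩
    have hInner := fun (j : Fin G.es.length) => (FJ j).2.2.2.2
    have hInnerAny : ∀ j : Fin G.es.length, ∃ q : List (Gs (j : ℕ)).V,
        q.head? = some (Gs (j : ℕ)).s ∧ q.getLast? = some (Gs (j : ℕ)).t ∧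
        q.Chain' (fun a b => (a, b) ∈ (Gs (j : ℕ)).es) := by
      intro j
      obtain ⟨q, h1, h2, h3, -⟩ :=
        hInner j ((Gs (j : ℕ)).es.get ⟨0, hlenpos j⟩) (List.get_mem _ _)
      exact ⟨q, h1, h2, h3⟩
    have hembs : ∀ k : Fin G.es.length, compEmb G Gs k (Gs (k : ℕ)).s
        = Quot.mk (oGlueRel G Gs) (Sum.inl ((G.es.get k).1)) :=
      fun k => (Quot.sound ⟨k, Or.inl ⟨rfl, rfl⟩⟩).symm
    have hembt : ∀ k : Fin G.es.length, compEmb G Gs k (Gs (k : ℕ)).t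
        = Quot.mk (oGlueRel G Gs) (Sum.inl ((G.es.get k).2)) :=
      fun k => (Quot.sound ⟨k, Or.inr ⟨rfl, rfl⟩⟩).symm
    have hExtend : ∀ (k : Fin G.es.length) (q : List (Gs (k : ℕ)).V)
        (P' : List (compV G Gs)),
        q.head? = some (Gs (k : ℕ)).s → q.getLast? = some (Gs (k : ℕ)).t →
        q.Chain' (fun a b => (a, b) ∈ (Gs (k : ℕ)).es) →
        P'.head? = some (Quot.mk (oGlueRel G Gs) (Sum.inl ((G.es.get k).2))) →
        P'.Chain' (fun a b => (a, b) ∈ (compO G Gs).es) →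
        ((List.map (compEmb G Gs k) q ++ P'.tail).head?
            = some (Quot.mk (oGlueRel G Gs) (Sum.inl ((G.es.get k).1))) ∧
          (List.map (compEmb G Gs k) q ++ P'.tail).getLast? = P'.getLast? ∧
          (List.map (compEmb G Gs k) q ++ P'.tail).Chain'
            (fun a b => (a, b) ∈ (compO G Gs).es)) := by
      intro k q P' hq1 hq2 hq3 hP1 hP3
      cases P' with
      | nil => simp at hP1
      | cons c P'' =>
        have hc : c = Quot.mk (oGlueRel G Gs) (Sum.inl ((G.es.get k).2)) := by
          exact Option.some.inj hP1
        have hmq_head : (List.map (compEmb G Gs k) q).head?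
            = some (Quot.mk (oGlueRel G Gs) (Sum.inl ((G.es.get k).1))) := by
          rw [List.head?_map, hq1, Option.map_some, hembs k]; rfl
        have hmq_last : (List.map (compEmb G Gs k) q).getLast?
            = some (Quot.mk (oGlueRel G Gs) (Sum.inl ((G.es.get k).2))) := by
          rw [List.getLast?_map, hq2, Option.map_some, hembt k]; rfl
        refine ⟨?_, ?_, ?_⟩
        · rw [List.head?_append, hmq_head]
          rfl
        · show (List.map (compEmb G Gs k) q ++ P'').getLast? = (c :: P'').getLast?
          cases P'' with
          | nil =>
            rw [List.append_nil, hmq_last, ← hc]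
            rfl
          | cons d P''' =>
            rw [List.getLast?_append, List.getLast?_cons_cons]
            obtain ⟨z, hz⟩ := Option.isSome_iff_exists.mp
              (List.getLast?_isSome.mpr (List.cons_ne_nil d P'''))
            rw [hz]
            rfl
        · refine List.IsChain.append ?_ hP3.tail ?_
          · erw [List.isChain_map]
            refine hq3.imp ?_
            intro a b hab
            exact hCedge k (a, b) hab
          · intro x hx y hy
            erw [hmq_last] at hx
            have hx' : Quot.mk (oGlueRel G Gs) (Sum.inl ((G.es.get k).2)) = x := by
              exact Option.some.inj hx
            subst hx'
            rw [← hc]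
            exact (List.isChain_cons.mp hP3).1 y hy
    have spliceB : ∀ p : List G.V, p.Chain' (fun a b => (a, b) ∈ G.es) →
        ∃ P : List (compV G Gs),
          P.head? = p.head?.map (fun a => Quot.mk (oGlueRel G Gs) (Sum.inl a)) ∧
          P.getLast? = p.getLast?.map (fun a => Quot.mk (oGlueRel G Gs) (Sum.inl a)) ∧
          P.Chain' (fun a b => (a, b) ∈ (compO G Gs).es) := by
      intro p
      induction p with
      | nil => intro _; exact ⟨[], rfl, rfl, List.isChain_nil⟩
      | cons a p ih =>
        intro hch
        cases p with
        | nil =>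
          exact ⟨[Quot.mk (oGlueRel G Gs) (Sum.inl a)], rfl, rfl, List.isChain_singleton _⟩
        | cons b p' =>
          obtain ⟨hab, hch'⟩ := List.isChain_cons_cons.mp hch
          obtain ⟨P', h1', h2', h3'⟩ := ih hch'
          obtain ⟨k, hk⟩ := List.mem_iff_get.mp hab
          obtain ⟨q, hq1, hq2, hq3⟩ := hInnerAny k
          have hP1 : P'.head? = some (Quot.mk (oGlueRel G Gs) (Sum.inl ((G.es.get k).2))) := by
            rw [h1', hk]
            rfl
          obtain ⟨e1, e2, e3⟩ := hExtend k q P' hq1 hq2 hq3 hP1 h3'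
          refine ⟨List.map (compEmb G Gs k) q ++ P'.tail, ?_, ?_, e3⟩
          · rw [e1, hk]
            rfl
          · rw [e2, List.getLast?_cons_cons]
            exact h2'
    have spliceD : ∀ (j0 : Fin G.es.length) (f0 : _), f0 ∈ (Gs (j0 : ℕ)).es →
        ∀ p : List G.V, p.Chain' (fun a b => (a, b) ∈ G.es) →
        ((G.es.get j0).1, (G.es.get j0).2) ∈ p.zip p.tail →
        ∃ P : List (compV G Gs),
          P.head? = p.head?.map (fun a => Quot.mk (oGlueRel G Gs) (Sum.inl a)) ∧
          P.getLast? = p.getLast?.map (fun a => Quot.mk (oGlueRel G Gs) (Sum.inl a)) ∧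
          P.Chain' (fun a b => (a, b) ∈ (compO G Gs).es) ∧
          (compEmb G Gs j0 f0.1, compEmb G Gs j0 f0.2) ∈ P.zip P.tail := by
      intro j0 f0 hf0 p
      induction p with
      | nil => intro _ hmem; simp at hmem
      | cons a p ih =>
        intro hch hmem
        cases p with
        | nil => simp at hmem
        | cons b p' =>
          obtain ⟨hab, hch'⟩ := List.isChain_cons_cons.mp hch
          rcases List.mem_cons.mp hmem with hcase | hcase
          · have ha : (G.es.get j0).1 = a := congrArg Prod.fst hcase
            have hb : (G.es.get j0).2 = b := congrArg Prod.snd hcase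
            obtain ⟨q, hq1, hq2, hq3, hq4⟩ := hInner j0 f0 hf0
            obtain ⟨P', h1', h2', h3'⟩ := spliceB (b :: p') hch'
            have hP1 : P'.head?
                = some (Quot.mk (oGlueRel G Gs) (Sum.inl ((G.es.get j0).2))) := by
              rw [h1', hb]
              rfl
            obtain ⟨e1, e2, e3⟩ := hExtend j0 q P' hq1 hq2 hq3 hP1 h3'
            refine ⟨List.map (compEmb G Gs j0) q ++ P'.tail, ?_, ?_, e3, ?_⟩
            · rw [e1, ha]
              rfl
            · rw [e2, List.getLast?_cons_cons]
              exact h2'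
            · apply zip_tail_append_right
              rw [map_tail', List.zip_map]
              exact List.mem_map.mpr ⟨f0, hq4, rfl⟩
          · obtain ⟨P', h1', h2', h3', h4'⟩ := ih hch' hcase
            obtain ⟨k, hk⟩ := List.mem_iff_get.mp hab
            obtain ⟨q, hq1, hq2, hq3⟩ := hInnerAny k
            have hP1 : P'.head?
                = some (Quot.mk (oGlueRel G Gs) (Sum.inl ((G.es.get k).2))) := by
              rw [h1', hk]
              rfl
            obtain ⟨e1, e2, e3⟩ := hExtend k q P' hq1 hq2 hq3 hP1 h3'
            refine ⟨List.map (compEmb G Gs k) q ++ P'.tail, ?_, ?_, e3, ?_⟩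
            · rw [e1, hk]
              rfl
            · rw [e2, List.getLast?_cons_cons]
              exact h2'
            · have hqne : q ≠ [] := by
                intro hq
                rw [hq] at hq1
                simp at hq1
              have hmapne : List.map (compEmb G Gs k) q ≠ [] := by
                simpa [List.map_eq_nil_iff] using hqne
              have hlastv : (List.map (compEmb G Gs k) q).getLast hmapne
                  = Quot.mk (oGlueRel G Gs) (Sum.inl ((G.es.get k).2)) := by
                have hml : (List.map (compEmb G Gs k) q).getLast?
                    = some (Quot.mk (oGlueRel G Gs) (Sum.inl ((G.es.get k).2))) := by
                  rw [List.getLast?_map, hq2, Option.map_some, hembt k]; rfl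
                have := List.getLast?_eq_getLast (l := List.map (compEmb G Gs k) q) hmapne
                rw [this] at hml
                exact Option.some.inj hml
              cases P' with
              | nil => simp at hP1
              | cons c P'' =>
                have hc : c = Quot.mk (oGlueRel G Gs) (Sum.inl ((G.es.get k).2)) := by
                  exact Option.some.inj hP1
                have hsplit : List.map (compEmb G Gs k) q ++ (c :: P'').tail
                    = (List.map (compEmb G Gs k) q).dropLast ++ (c :: P'') := by
                  conv_lhs => rw [← List.dropLast_append_getLast hmapne]
                  rw [List.append_assoc, hlastv, ← hc]
                  rfl
                rw [hsplit]
                exact zip_tail_append_left _ _ _ h4'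
    intro e he
    obtain ⟨j, f, hf, rfl⟩ := hmemC e he
    obtain ⟨p, hp1, hp2, hp3, hp4⟩ := hG5 (G.es.get j) (List.get_mem _ _)
    obtain ⟨P, hP1, hP2, hP3, hP4⟩ := spliceD j f hf p hp3 hp4
    exact ⟨P, by erw [hP1, hp1]; rfl, by erw [hP2, hp2]; rfl, hP3, hP4⟩

end OperadDev

/-- Flow graphs with linearly ordered edges form a symmetric operad in `Set` under
substitution, with unit the single-edge flow graph: flow graphs are closed under
substitution, substitution is unital and associative, and it is equivariant with respect
to permutations of the ordered edges (the right-hand side being the blockwise-permuted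
substituted graph). -/
theorem stmt17 :
    (∀ (G : OFG) (Gs : ℕ → OFG), IsFlowO G → (∀ j < G.es.length, IsFlowO (Gs j)) →
      IsFlowO (compO G Gs)) ∧
    (∀ G : OFG, OIso (compO unitO (fun _ => G)) G) ∧
    (∀ G : OFG, OIso (compO G (fun _ => unitO)) G) ∧
    (∀ (G : OFG) (Gs Hs : ℕ → OFG),
      OIso (compO (compO G Gs) Hs)
        (compO G (fun j => compO (Gs j) (fun i => Hs (offsetO Gs j + i))))) ∧
    (∀ (G : OFG) (Gs : ℕ → OFG) (σ : Equiv.Perm (Fin G.es.length)),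
      OIso
        (compO (permO G σ)
          (fun j => if h : j < G.es.length then Gs ((σ ⟨j, h⟩ : Fin G.es.length) : ℕ)
            else Gs j))
        ⟨compV G Gs, (compO G Gs).s, (compO G Gs).t,
          (List.range G.es.length).flatMap (fun j =>
            if h : j < G.es.length then
              compBlock G Gs (σ ⟨j, h⟩)
            else [])⟩) := by
  exact ⟨OperadDev.flow_comp, OperadDev.unit_left, OperadDev.unit_right,
    OperadDev.assoc, OperadDev.equivar⟩
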